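/- If 1 → F → G → Q → 1 is a short exact sequence of groups where F is a free group of rank ≥ 2 and Q has trivial center, then G has trivial center. -/

import Mathlib

open FreeGroup in
private lemma freeGroup_central_eq_one {S : Type*} (hS : ∃ a b : S, a ≠ b)
    (w : FreeGroup S) (hcomm : ∀ u : FreeGroup S, w * u = u * w) : w = 1 := by
  classical
  by_contra hw
  obtain ⟨a, b, hab⟩ := hS
  set L := w.toWord with hLdef
  have hLred : reduce L = L := reduce_toWord w
  have hLne : L ≠ [] := fun h => hw (toWord_eq_nil_iff.mp h)
  -- head decomposition
  obtain ⟨p, L', hpL⟩ : ∃ p L', L = p :: L' := by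
    cases hL : L with
    | nil => exact absurd hL hLne
    | cons p L' => exact ⟨p, L', rfl⟩
  -- tail decomposition
  obtain ⟨M, q, hMq⟩ : ∃ M q, L = M ++ [q] := by
    rcases List.eq_nil_or_concat L with h | ⟨M, q, h⟩
    · exact absurd h hLne
    · exact ⟨M, q, h.trans List.concat_eq_append⟩
  set c : S := if p.1 = a then b else a with hc
  have hcx : c ≠ p.1 := by
    by_cases h : p.1 = a
    · simp [hc, h]; exact fun hh => hab hh.symm
    · simp [hc, h]; exact fun hh => h hh.symm
  set e : Bool := if q.1 = c then q.2 else true with he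
  set z : FreeGroup S := mk [(c, e)] with hz
  -- invRev facts
  have hinvL : invRev L = (q.1, !q.2) :: invRev M := by
    rw [hMq]; simp [invRev]
  have hinvLred : reduce (invRev L) = invRev L := by
    rw [reduce_invRev, hLred]
  -- `z * w` has reduced word `(c,e) :: L`
  have hred1 : reduce ((c, e) :: L) = (c, e) :: L := by
    rw [reduce.cons, hLred, hpL]
    simp only []
    rw [if_neg]
    rintro ⟨h1, -⟩
    exact hcx h1
  have hzw : (z * w).toWord = (c, e) :: L := by
    conv_lhs => rw [hz, ← mk_toWord (x := w), ← hLdef, mul_mk]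
    rw [toWord_mk]
    exact hred1
  -- `z⁻¹ * w⁻¹` has reduced word `(c, !e) :: invRev L`
  have hred2 : reduce ((c, !e) :: invRev L) = (c, !e) :: invRev L := by
    rw [reduce.cons, hinvLred, hinvL]
    simp only []
    rw [if_neg]
    rintro ⟨h1, h2⟩
    simp only [Bool.not_not] at h2
    by_cases hyc : q.1 = c
    · rw [he, if_pos hyc] at h2
      exact (Bool.not_ne_self q.2) (h2.symm ▸ rfl)
    · exact hyc (h1.symm)
  have hwz : (w * z).toWord = L ++ [(c, e)] := by
    have h1 : w * z = (z⁻¹ * w⁻¹)⁻¹ := by group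
    have h2 : z⁻¹ * w⁻¹ = mk ((c, !e) :: invRev L) := by
      rw [hz, ← mk_toWord (x := w), ← hLdef, inv_mk, inv_mk, mul_mk]
      congr 1
    rw [h1, toWord_inv, h2, toWord_mk, hred2]
    simp [invRev, List.map_reverse, Function.comp_def]
  have hkey : ((c, e) :: L : List (S × Bool)) = L ++ [(c, e)] := by
    rw [← hzw, ← hwz, hcomm z]
  rw [hpL] at hkey
  simp only [List.cons_append] at hkey
  injection hkey with h1 _
  exact hcx (congrArg Prod.fst h1)

/-- If `1 → F → G → Q → 1` is a short exact sequence of groups with `F` a free group of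
rank at least 2 and `Q` having trivial center, then `G` has trivial center. -/
theorem center_eq_bot_of_ses_free_kernel {S : Type*} {G Q : Type*} [Group G] [Group Q]
    (hS : ∃ a b : S, a ≠ b)
    (f : FreeGroup S →* G) (g : G →* Q)
    (hf : Function.Injective f) (hg : Function.Surjective g)
    (hexact : f.range = g.ker)
    (hQ : Subgroup.center Q = ⊥) :
    Subgroup.center G = ⊥ := by
  rw [Subgroup.eq_bot_iff_forall]
  intro x hx
  rw [Subgroup.mem_center_iff] at hx
  have hgx : g x = 1 := by
    have : g x ∈ Subgroup.center Q := by
      rw [Subgroup.mem_center_iff]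
      intro qq
      obtain ⟨y, rfl⟩ := hg qq
      rw [← map_mul, ← map_mul, hx y]
    rwa [hQ, Subgroup.mem_bot] at this
  have hxr : x ∈ f.range := by
    rw [hexact, MonoidHom.mem_ker]; exact hgx
  obtain ⟨w, rfl⟩ := hxr
  have hwc : ∀ u : FreeGroup S, w * u = u * w := by
    intro u
    apply hf
    rw [map_mul, map_mul, hx (f u)]
  rw [freeGroup_central_eq_one hS w hwc, map_one]
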